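/- Let G = H' ∪ H'' be a global amoeba with H', H'' vertex-disjoint subgraphs covering all edges of G, and let H be a vertex-disjoint copy of H'. Then for any non-edge e of H, the graph G ∪ (H + e) is a global amoeba, and for any edge e of H, the graph G ∪ (H − e) is a global amoeba. -/

import Mathlib

open SimpleGraph Equiv

/-- The labeled copy `G_σ`, with edges `v_{σ⁻¹ i} v_{σ⁻¹ j}` for edges `v_i v_j` of `G`. -/
def copyG {V : Type*} (G : SimpleGraph V) (σ : Equiv.Perm V) : SimpleGraph V where
  Adj a b := G.Adj (σ a) (σ b)
  symm := ⟨fun _ _ h => G.adj_symm h⟩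
  loopless := ⟨fun _ h => G.irrefl h⟩

/-- The graph `G - v_r v_s + v_k v_l`. -/
def replaceG {V : Type*} (G : SimpleGraph V) (r s k l : V) : SimpleGraph V :=
  SimpleGraph.fromEdgeSet ((G.edgeSet \ {s(r, s)}) ∪ {s(k, l)})

/-- The edge-replacement `rs → kl` is feasible: `v_r v_s ∈ E(G)`, `v_k v_l` is a non-edge or
`{k,l} = {r,s}`, and `G - v_r v_s + v_k v_l ≅ G`. -/
def IsFeasible {V : Type*} (G : SimpleGraph V) (r s k l : V) : Prop :=
  G.Adj r s ∧ (Gᶜ.Adj k l ∨ s(k, l) = s(r, s)) ∧ Nonempty (replaceG G r s k l ≃g G)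

/-- The permutations realizing feasible edge-replacements of `G`. -/
def feasiblePerms {V : Type*} (G : SimpleGraph V) : Set (Equiv.Perm V) :=
  {σ | ∃ r s k l, IsFeasible G r s k l ∧ copyG G σ = replaceG G r s k l}

/-- The group `S_G` generated by all permutations realizing feasible edge-replacements. -/
def ampGroup {V : Type*} (G : SimpleGraph V) : Subgroup (Equiv.Perm V) :=
  Subgroup.closure (feasiblePerms G)

/-- `G` is a local amoeba if `S_G` is the full symmetric group. -/
def LocalAmoeba {V : Type*} (G : SimpleGraph V) : Prop := ampGroup G = ⊤

/-- Disjoint union of two graphs. -/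
def sumGraph {V W : Type*} (H : SimpleGraph V) (H' : SimpleGraph W) : SimpleGraph (V ⊕ W) :=
  SimpleGraph.map (⟨Sum.inl, Sum.inl_injective⟩ : V ↪ V ⊕ W) H ⊔ SimpleGraph.map (⟨Sum.inr, Sum.inr_injective⟩ : W ↪ V ⊕ W) H'

/-- `G` together with `t` additional isolated vertices. -/
def addIsolated {V : Type*} (G : SimpleGraph V) (t : ℕ) : SimpleGraph (V ⊕ Fin t) :=
  sumGraph G (⊥ : SimpleGraph (Fin t))

/-- `G` is a global amoeba if `G ∪ tK₁` is a local amoeba for all sufficiently large `t`. -/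
def GlobalAmoeba {V : Type*} (G : SimpleGraph V) : Prop :=
  ∃ T : ℕ, ∀ t ≥ T, LocalAmoeba (addIsolated G t)

section Lemmas

variable {α β : Type*} {H1 : SimpleGraph α} {H2 : SimpleGraph β}

@[simp] lemma sumGraph_adj_inl_inl {a b : α} :
    (sumGraph H1 H2).Adj (.inl a) (.inl b) ↔ H1.Adj a b := by
  simp only [sumGraph, SimpleGraph.sup_adj, SimpleGraph.map_adj]
  simp

@[simp] lemma sumGraph_adj_inr_inr {a b : β} :
    (sumGraph H1 H2).Adj (.inr a) (.inr b) ↔ H2.Adj a b := by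
  simp only [sumGraph, SimpleGraph.sup_adj, SimpleGraph.map_adj]
  simp

@[simp] lemma sumGraph_adj_inl_inr {a : α} {b : β} :
    ¬ (sumGraph H1 H2).Adj (.inl a) (.inr b) := by
  simp only [sumGraph, SimpleGraph.sup_adj, SimpleGraph.map_adj]
  simp

@[simp] lemma sumGraph_adj_inr_inl {a : β} {b : α} :
    ¬ (sumGraph H1 H2).Adj (.inr a) (.inl b) := by
  simp only [sumGraph, SimpleGraph.sup_adj, SimpleGraph.map_adj]
  simp

lemma replaceG_adj {G : SimpleGraph α} {r s k l u v : α} :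
    (replaceG G r s k l).Adj u v ↔
      ((G.Adj u v ∧ s(u, v) ≠ s(r, s)) ∨ s(u, v) = s(k, l)) ∧ u ≠ v := by
  simp only [replaceG, fromEdgeSet_adj, Set.mem_union, Set.mem_diff, Set.mem_singleton_iff,
    SimpleGraph.mem_edgeSet]

lemma copyG_eq_iff {G G' : SimpleGraph α} {σ : Perm α} :
    copyG G σ = G' ↔ ∀ u v, G.Adj (σ u) (σ v) ↔ G'.Adj u v := by
  constructor
  · rintro rfl u v; rfl
  · intro h; ext u v; exact h u v

lemma iso_of_copy_eq {G G' : SimpleGraph α} {σ : Perm α} (h : copyG G σ = G') :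
    Nonempty (G' ≃g G) := by
  refine ⟨⟨σ, fun {u v} => ?_⟩⟩
  rw [← h]; rfl

lemma replaceG_self {G : SimpleGraph α} {r s : α} (h : G.Adj r s) :
    replaceG G r s r s = G := by
  ext u v
  rw [replaceG_adj]
  constructor
  · rintro ⟨(⟨h1, _⟩ | h1), hne⟩
    · exact h1
    · rcases Sym2.eq_iff.mp h1 with ⟨rfl, rfl⟩ | ⟨rfl, rfl⟩
      · exact h
      · exact h.symm
  · intro h1
    refine ⟨?_, h1.ne⟩
    by_cases he : s(u,v) = s(r,s)
    · exact Or.inr he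
    · exact Or.inl ⟨h1, he⟩

lemma mem_ampGroup {G : SimpleGraph α} {σ : Perm α} (r s k l : α)
    (h1 : IsFeasible G r s k l) (h2 : copyG G σ = replaceG G r s k l) : σ ∈ ampGroup G :=
  Subgroup.subset_closure ⟨r, s, k, l, h1, h2⟩

/-- finite defect subgroup -/
def finDefect (G : SimpleGraph α) : Subgroup (Perm α) where
  carrier := {π | Set.Finite {p : α × α | ¬ (G.Adj (π p.1) (π p.2) ↔ G.Adj p.1 p.2)}}
  one_mem' := by simp
  mul_mem' := by
    intro a b ha hb
    have hpre : Set.Finite ((fun p : α × α => (b p.1, b p.2)) ⁻¹'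
        {p : α × α | ¬ (G.Adj (a p.1) (a p.2) ↔ G.Adj p.1 p.2)}) := by
      refine ha.preimage ?_
      intro p _ q _ h
      have h1 := congrArg Prod.fst h
      have h2 := congrArg Prod.snd h
      simp only at h1 h2
      exact Prod.ext (b.injective h1) (b.injective h2)
    refine Set.Finite.subset (hpre.union hb) ?_
    intro p hp
    by_cases h2 : G.Adj (b p.1) (b p.2) ↔ G.Adj p.1 p.2
    · left
      simp only [Set.mem_preimage, Set.mem_setOf_eq]
      intro h1
      exact hp (by simpa [Perm.mul_apply] using h1.trans h2)
    · exact Or.inr h2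
  inv_mem' := by
    intro a ha
    have himg : {p : α × α | ¬ (G.Adj (a⁻¹ p.1) (a⁻¹ p.2) ↔ G.Adj p.1 p.2)} =
        (fun p : α × α => (a p.1, a p.2)) '' 
          {p : α × α | ¬ (G.Adj (a p.1) (a p.2) ↔ G.Adj p.1 p.2)} := by
      ext p
      simp only [Set.mem_setOf_eq, Set.mem_image, Prod.exists]
      constructor
      · intro h
        refine ⟨a⁻¹ p.1, a⁻¹ p.2, ?_, by simp⟩
        simp only [Perm.coe_inv, Equiv.apply_symm_apply]
        exact fun hh => h hh.symm
      · rintro ⟨x, y, hx, rfl⟩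
        simp only [Perm.coe_inv, Equiv.symm_apply_apply]
        exact fun hh => hx hh.symm
    show Set.Finite _
    rw [himg]
    exact ha.image _

end Lemmas

section Defect
variable {α : Type*}

lemma feasible_subset_finDefect {G : SimpleGraph α} :
    feasiblePerms G ⊆ (finDefect G : Set (Perm α)) := by
  rintro σ ⟨r, s, k, l, _, hcopy⟩
  show Set.Finite _
  refine Set.Finite.subset (Set.toFinite {((r,s) : α × α), (s,r), (k,l), (l,k)}) ?_
  intro p hp
  have hc := copyG_eq_iff.mp hcopy p.1 p.2
  have hp' : ¬ ((replaceG G r s k l).Adj p.1 p.2 ↔ G.Adj p.1 p.2) := fun h =>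
    hp (hc.trans h)
  have hne : s(p.1, p.2) = s(r, s) ∨ s(p.1, p.2) = s(k, l) := by
    by_contra hcon
    push_neg at hcon
    refine hp' ?_
    rw [replaceG_adj]
    constructor
    · rintro ⟨⟨h1, _⟩ | h1, _⟩
      · exact h1
      · exact absurd h1 hcon.2
    · intro h1
      exact ⟨Or.inl ⟨h1, hcon.1⟩, h1.ne⟩
  rcases hne with h | h <;> rcases Sym2.eq_iff.mp h with ⟨h1, h2⟩ | ⟨h1, h2⟩ <;>
    simp [Prod.ext_iff, h1, h2]

/-- Forbidden set around a chosen edge. -/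
def badv (G : SimpleGraph α) (p : α × α) : Set α :=
  ({p.1, p.2} : Set α) ∪ {u | G.Adj p.1 u} ∪ {u | G.Adj p.2 u}

lemma exists_indep_seq (G : SimpleGraph α) (hdeg : ∀ v, {u | G.Adj v u}.Finite)
    (hD : {v | ∃ u, G.Adj v u}.Infinite) :
    ∃ f : ℕ → α × α, (∀ n, G.Adj (f n).1 (f n).2) ∧
      ∀ m n, m < n → (f n).1 ∉ badv G (f m) ∧ (f n).2 ∉ badv G (f m) := by
  classical
  have hbadfin : ∀ p : α × α, (badv G p).Finite := fun p =>
    (((Set.finite_singleton p.1).insert p.2).union (hdeg p.1)).union (hdeg p.2) |>.subset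
      (by intro z hz; rcases hz with (h | h) | h
          · rcases h with h | h
            · exact Or.inl (Or.inl (Or.inr h))
            · exact Or.inl (Or.inl (Or.inl h))
          · exact Or.inl (Or.inr h)
          · exact Or.inr h)
  have step : ∀ lst : List (α × α), ∃ p : α × α, G.Adj p.1 p.2 ∧
      ∀ q ∈ lst, p.1 ∉ badv G q ∧ p.2 ∉ badv G q := by
    intro lst
    have hB : (⋃ q ∈ lst, badv G q).Finite :=
      Set.Finite.biUnion lst.finite_toSet (fun q _ => hbadfin q)
    have hNB : ((⋃ q ∈ lst, badv G q) ∪ ⋃ b ∈ (⋃ q ∈ lst, badv G q), {u | G.Adj b u}).Finite :=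
      hB.union (hB.biUnion fun b _ => hdeg b)
    obtain ⟨v, hvD, hvNB⟩ := (hD.diff hNB).nonempty
    obtain ⟨u, hu⟩ := hvD
    refine ⟨(v, u), hu, ?_⟩
    intro q hq
    have hvB : v ∉ ⋃ q ∈ lst, badv G q := fun h => hvNB (Or.inl h)
    have huB : u ∉ ⋃ q ∈ lst, badv G q := by
      intro h
      exact hvNB (Or.inr (Set.mem_biUnion h hu.symm))
    exact ⟨fun h => hvB (Set.mem_biUnion hq h), fun h => huB (Set.mem_biUnion hq h)⟩
  let l : ℕ → List (α × α) := fun n => Nat.rec [] (fun _ ih => Classical.choose (step ih) :: ih) n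
  have hl : ∀ n, l (n + 1) = Classical.choose (step (l n)) :: l n := fun n => rfl
  have hsuffix : ∀ m n, m ≤ n → l m <:+ l n := by
    intro m n h
    induction n with
    | zero => rw [Nat.le_zero.mp h]
    | succ n ih =>
      rcases Nat.lt_or_ge m (n + 1) with h' | h'
      · refine (ih (by omega)).trans ?_
        rw [hl]
        exact List.suffix_cons _ _
      · rw [Nat.le_antisymm h h']
  refine ⟨fun n => Classical.choose (step (l n)), fun n => (Classical.choose_spec (step (l n))).1,
    fun m n h => (Classical.choose_spec (step (l n))).2 _ ?_⟩
  have hmem : Classical.choose (step (l m)) ∈ l (m + 1) := by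
    rw [hl]; exact List.mem_cons_self
  exact (hsuffix (m + 1) n h).subset hmem

lemma not_mem_badv {G : SimpleGraph α} {p : α × α} {z : α} (h : z ∉ badv G p) :
    z ≠ p.1 ∧ z ≠ p.2 ∧ ¬ G.Adj p.1 z ∧ ¬ G.Adj p.2 z := by
  refine ⟨fun hh => h (Or.inl (Or.inl (Or.inl hh))), fun hh => h (Or.inl (Or.inl (Or.inr hh))),
    fun hh => h (Or.inl (Or.inr hh)), fun hh => h (Or.inr hh)⟩

lemma support_finite (G : SimpleGraph α) (w0 : α) (hw0 : ∀ u, ¬ G.Adj w0 u)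
    (hfd : ∀ π : Perm α, π ∈ finDefect G) : {v | ∃ u, G.Adj v u}.Finite := by
  classical
  have hdeg : ∀ v, {u | G.Adj v u}.Finite := by
    intro v
    by_cases hv : v = w0
    · subst hv
      convert Set.finite_empty
      ext u
      simp [hw0 u]
    · have hd : Set.Finite {p : α × α | ¬ (G.Adj (Equiv.swap v w0 p.1) (Equiv.swap v w0 p.2)
          ↔ G.Adj p.1 p.2)} := hfd (Equiv.swap v w0)
      have hpre : Set.Finite ((fun u : α => ((u, v) : α × α)) ⁻¹'
          {p : α × α | ¬ (G.Adj (Equiv.swap v w0 p.1) (Equiv.swap v w0 p.2) ↔ G.Adj p.1 p.2)}) := by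
        refine hd.preimage ?_
        intro p _ q _ h
        exact congrArg Prod.fst h
      refine Set.Finite.subset ((hpre.union (Set.finite_singleton v)).union
        (Set.finite_singleton w0)) ?_
      · intro u hu
        by_cases h1 : u = v
        · exact Or.inl (Or.inr h1)
        by_cases h2 : u = w0
        · exact Or.inr h2
        left; left
        show ¬ (G.Adj (Equiv.swap v w0 u) (Equiv.swap v w0 v) ↔ G.Adj u v)
        rw [Equiv.swap_apply_of_ne_of_ne h1 h2, Equiv.swap_apply_left]
        intro hiff
        exact hw0 u (G.adj_symm (hiff.mpr hu.symm))
  by_contra hfin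
  have hD : {v | ∃ u, G.Adj v u}.Infinite := hfin
  obtain ⟨f, hadj, hsep⟩ := exists_indep_seq G hdeg hD
  set y : ℕ → α := fun i => (f i).2 with hy
  set x : ℕ → α := fun i => (f i).1 with hx
  have hyinj : Function.Injective y := by
    intro i j h
    by_contra hij
    rcases Nat.lt_or_ge i j with h' | h'
    · exact (not_mem_badv (hsep i j h').2).2.1 h.symm
    · exact (not_mem_badv (hsep j i (by omega)).2).2.1 h
  have hxy : ∀ i j, y j ≠ x i := by
    intro i j
    rcases Nat.lt_trichotomy i j with h | h | h
    · exact (not_mem_badv (hsep i j h).2).1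
    · subst h; exact fun hh => (hadj i).ne hh.symm
    · intro hh
      exact (not_mem_badv (hsep j i h).1).2.1 hh.symm
  set pairN : ℕ → ℕ := fun n => if n % 2 = 0 then n + 1 else n - 1 with hpairN
  have hpair : ∀ n, pairN (pairN n) = n := by
    intro n
    by_cases h : n % 2 = 0
    · show pairN (pairN n) = n
      rw [hpairN]
      simp only
      rw [if_pos h, if_neg (by omega)]
      omega
    · rw [hpairN]
      simp only
      rw [if_neg h, if_pos (by omega)]
      omega
  set φ : α → α := fun z => if h : ∃ i, y i = z then y (pairN (Classical.choose h)) else z with hφ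
  have hyφ : ∀ i, φ (y i) = y (pairN i) := by
    intro i
    have he : ∃ j, y j = y i := ⟨i, rfl⟩
    have : Classical.choose he = i := hyinj (Classical.choose_spec he)
    rw [hφ]
    simp only [dif_pos he, this]
  have hxφ : ∀ z, (∀ i, y i ≠ z) → φ z = z := by
    intro z hz
    rw [hφ]
    exact dif_neg (fun ⟨i, hi⟩ => hz i hi)
  have hφinv : Function.Involutive φ := by
    intro z
    by_cases h : ∃ i, y i = z
    · obtain ⟨i, rfl⟩ := h
      rw [hyφ, hyφ, hpair]
    · push_neg at h
      rw [hxφ z h, hxφ z h]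
  set π : Perm α := hφinv.toPerm with hπ
  have hπy : ∀ i, π (y i) = y (pairN i) := fun i => hyφ i
  have hπx : ∀ i, π (x i) = x i := fun i => hxφ (x i) (fun j => hxy i j)
  have hinf : Set.Infinite {p : α × α | ¬ (G.Adj (π p.1) (π p.2) ↔ G.Adj p.1 p.2)} := by
    refine Set.infinite_of_injective_forall_mem
      (f := fun i : ℕ => ((x (2 * i), y (2 * i)) : α × α)) ?_ ?_
    · intro i j h
      have h1 : x (2 * i) = x (2 * j) := (Prod.ext_iff.mp h).1
      by_contra hij
      have hij2 : 2 * i ≠ 2 * j := by omega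
      rcases Nat.lt_or_ge (2 * i) (2 * j) with h' | h'
      · exact (not_mem_badv (hsep _ _ h').1).1 h1.symm
      · exact (not_mem_badv (hsep (2 * j) (2 * i) (by omega)).1).1 h1
    · intro i
      show ¬ (G.Adj (π (x (2 * i))) (π (y (2 * i))) ↔ G.Adj (x (2 * i)) (y (2 * i)))
      rw [hπx, hπy]
      have h2i : pairN (2 * i) = 2 * i + 1 := by
        rw [hpairN]; simp only; rw [if_pos (by omega)]
      rw [h2i]
      have hnadj : ¬ G.Adj (x (2 * i)) (y (2 * i + 1)) :=
        (not_mem_badv (hsep (2 * i) (2 * i + 1) (by omega)).2).2.2.1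
      intro hiff
      exact hnadj (hiff.mpr (hadj (2 * i)))
  exact hinf (hfd π)

end Defect

section Core

variable {V W : Type*} {t : ℕ}

def jj : (V ⊕ W) ⊕ Fin t → ((V ⊕ W) ⊕ V) ⊕ Fin t
  | .inl z => .inl (.inl z)
  | .inr i => .inr i

def kk (v : V) : ((V ⊕ W) ⊕ V) ⊕ Fin t := .inl (.inr v)

lemma jj_inj : Function.Injective (jj (V := V) (W := W) (t := t)) := by
  rintro (z | i) (z' | i') h <;> simp [jj] at h <;> simp [h]

lemma kk_inj : Function.Injective (kk (V := V) (W := W) (t := t)) := by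
  intro p q h
  simpa [kk] using h

lemma jj_ne_kk (a : (V ⊕ W) ⊕ Fin t) (p : V) : jj a ≠ (kk p : ((V ⊕ W) ⊕ V) ⊕ Fin t) := by
  rcases a with z | i <;> simp [jj, kk]

lemma cases_X (u : ((V ⊕ W) ⊕ V) ⊕ Fin t) : (∃ a, u = jj a) ∨ ∃ p, u = kk p := by
  rcases u with (z | p) | i
  · exact Or.inl ⟨.inl z, rfl⟩
  · exact Or.inr ⟨p, rfl⟩
  · exact Or.inl ⟨.inr i, rfl⟩

def EE : (((V ⊕ W) ⊕ V) ⊕ Fin t) ≃ (((V ⊕ W) ⊕ Fin t) ⊕ V) where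
  toFun := fun z => match z with
    | .inl (.inl z) => .inl (.inl z)
    | .inl (.inr v) => .inr v
    | .inr i => .inl (.inr i)
  invFun := fun z => match z with
    | .inl (.inl z) => .inl (.inl z)
    | .inl (.inr i) => .inr i
    | .inr v => .inl (.inr v)
  left_inv := by rintro ((z | v) | i) <;> rfl
  right_inv := by rintro ((z | i) | v) <;> rfl

def Φfun (π : Perm ((V ⊕ W) ⊕ Fin t)) : Perm (((V ⊕ W) ⊕ V) ⊕ Fin t) :=
  EE.trans ((Equiv.sumCongr π (Equiv.refl V)).trans EE.symm)

lemma EE_jj (a : (V ⊕ W) ⊕ Fin t) : EE (jj a) = (.inl a : ((V ⊕ W) ⊕ Fin t) ⊕ V) := by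
  rcases a with z | i <;> rfl

lemma EE_symm_inl (a : (V ⊕ W) ⊕ Fin t) :
    EE.symm (.inl a : ((V ⊕ W) ⊕ Fin t) ⊕ V) = jj a := by
  rcases a with z | i <;> rfl

lemma Φfun_jj (π : Perm ((V ⊕ W) ⊕ Fin t)) (a : (V ⊕ W) ⊕ Fin t) :
    Φfun π (jj a) = jj (π a) := by
  show EE.symm ((Equiv.sumCongr π (Equiv.refl V)) (EE (jj a))) = jj (π a)
  rw [EE_jj]
  simp only [Equiv.sumCongr_apply, Sum.map_inl]
  exact EE_symm_inl _

lemma Φfun_kk (π : Perm ((V ⊕ W) ⊕ Fin t)) (p : V) :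
    Φfun π (kk p) = (kk p : ((V ⊕ W) ⊕ V) ⊕ Fin t) := rfl

def Φ : Perm ((V ⊕ W) ⊕ Fin t) →* Perm (((V ⊕ W) ⊕ V) ⊕ Fin t) where
  toFun := Φfun
  map_one' := by
    ext z
    rcases z with ((z | v) | i) <;> rfl
  map_mul' := by
    intro a b
    ext z
    rcases cases_X z with ⟨a0, rfl⟩ | ⟨p, rfl⟩
    · show Φfun (a * b) (jj a0) = Φfun a (Φfun b (jj a0))
      rw [Φfun_jj, Φfun_jj, Φfun_jj, Perm.mul_apply]
    · show Φfun (a * b) (kk p) = Φfun a (Φfun b (kk p))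
      rw [Φfun_kk, Φfun_kk, Φfun_kk]

lemma Φ_jj (π : Perm ((V ⊕ W) ⊕ Fin t)) (a : (V ⊕ W) ⊕ Fin t) : Φ π (jj a) = jj (π a) :=
  Φfun_jj π a

lemma Φ_kk (π : Perm ((V ⊕ W) ⊕ Fin t)) (p : V) :
    Φ π (kk p) = (kk p : ((V ⊕ W) ⊕ V) ⊕ Fin t) := rfl

def swFun : ((V ⊕ W) ⊕ V) ⊕ Fin t → ((V ⊕ W) ⊕ V) ⊕ Fin t
  | .inl (.inl (.inl p)) => .inl (.inr p)
  | .inl (.inl (.inr w)) => .inl (.inl (.inr w))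
  | .inl (.inr p) => .inl (.inl (.inl p))
  | .inr i => .inr i

lemma swFun_invol : Function.Involutive (swFun (V := V) (W := W) (t := t)) := by
  rintro (((p | w) | p) | i) <;> rfl

def σsw : Perm (((V ⊕ W) ⊕ V) ⊕ Fin t) := Function.Involutive.toPerm _ swFun_invol

lemma σsw_apply (z : ((V ⊕ W) ⊕ V) ⊕ Fin t) : σsw z = swFun z := rfl

lemma σsw_inv : (σsw (V := V) (W := W) (t := t))⁻¹ = σsw := rfl

end Core

section Adj

variable {V W : Type*} {t : ℕ} {H' : SimpleGraph V} {H'' : SimpleGraph W} {K : SimpleGraph V}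

lemma F_adj_jj (a b : (V ⊕ W) ⊕ Fin t) :
    (addIsolated (sumGraph (sumGraph H' H'') K) t).Adj (jj a) (jj b) ↔
      (addIsolated (sumGraph H' H'') t).Adj a b := by
  rcases a with (p | w) | i <;> rcases b with (p' | w') | i' <;>
    simp [jj, addIsolated]

lemma F_adj_kk (p q : V) :
    (addIsolated (sumGraph (sumGraph H' H'') K) t).Adj (kk p) (kk q) ↔ K.Adj p q := by
  simp [kk, addIsolated]

lemma F_adj_jj_kk (a : (V ⊕ W) ⊕ Fin t) (p : V) :
    ¬ (addIsolated (sumGraph (sumGraph H' H'') K) t).Adj (jj a) (kk p) := by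
  rcases a with z | i <;> simp [jj, kk, addIsolated]

lemma F_adj_kk_jj (a : (V ⊕ W) ⊕ Fin t) (p : V) :
    ¬ (addIsolated (sumGraph (sumGraph H' H'') K) t).Adj (kk p) (jj a) := by
  rcases a with z | i <;> simp [jj, kk, addIsolated]

lemma G_isolated {G : SimpleGraph (V ⊕ W)} (i : Fin t) (u : (V ⊕ W) ⊕ Fin t) :
    ¬ (addIsolated G t).Adj (.inr i) u := by
  rcases u with z | i' <;> simp [addIsolated]

lemma sym2_jj {a b c d : (V ⊕ W) ⊕ Fin t} :
    s(jj a, (jj b : ((V ⊕ W) ⊕ V) ⊕ Fin t)) = s(jj c, jj d) ↔ s(a, b) = s(c, d) := by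
  rw [Sym2.eq_iff, Sym2.eq_iff]
  simp [jj_inj.eq_iff]

lemma sym2_kk {a b c d : V} :
    s((kk a : ((V ⊕ W) ⊕ V) ⊕ Fin t), kk b) = s(kk c, kk d) ↔ s(a, b) = s(c, d) := by
  rw [Sym2.eq_iff, Sym2.eq_iff]
  simp [kk_inj.eq_iff]

lemma sym2_jj_ne_kk {a b : (V ⊕ W) ⊕ Fin t} {c d : V} :
    s(jj a, (jj b : ((V ⊕ W) ⊕ V) ⊕ Fin t)) ≠ s(kk c, kk d) := by
  intro h
  rcases Sym2.eq_iff.mp h with ⟨h1, _⟩ | ⟨h1, _⟩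
  · exact jj_ne_kk a c h1
  · exact jj_ne_kk a d h1

lemma sym2_mixed_ne_jj {a : (V ⊕ W) ⊕ Fin t} {p : V} {c d : (V ⊕ W) ⊕ Fin t} :
    s(jj a, (kk p : ((V ⊕ W) ⊕ V) ⊕ Fin t)) ≠ s(jj c, jj d) := by
  intro h
  rcases Sym2.eq_iff.mp h with ⟨_, h2⟩ | ⟨_, h2⟩
  · exact jj_ne_kk d p h2.symm
  · exact jj_ne_kk c p h2.symm

lemma phi_feasible (σ0 : Perm ((V ⊕ W) ⊕ Fin t))
    (h : σ0 ∈ feasiblePerms (addIsolated (sumGraph H' H'') t)) :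
    Φ σ0 ∈ feasiblePerms (addIsolated (sumGraph (sumGraph H' H'') K) t) := by
  obtain ⟨r, s, k, l, ⟨hadj, hdisj, _⟩, hcopy⟩ := h
  have hcp : copyG (addIsolated (sumGraph (sumGraph H' H'') K) t) (Φ σ0) =
      replaceG (addIsolated (sumGraph (sumGraph H' H'') K) t) (jj r) (jj s) (jj k) (jj l) := by
    rw [copyG_eq_iff]
    intro u v
    rcases cases_X u with ⟨a, rfl⟩ | ⟨p, rfl⟩ <;> rcases cases_X v with ⟨b, rfl⟩ | ⟨q, rfl⟩
    · rw [Φ_jj, Φ_jj, F_adj_jj, copyG_eq_iff.mp hcopy a b, replaceG_adj, replaceG_adj, F_adj_jj]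
      simp only [sym2_jj, ne_eq, jj_inj.eq_iff]
    · rw [Φ_jj, Φ_kk, replaceG_adj]
      constructor
      · intro hcon
        exact absurd hcon (F_adj_jj_kk _ _)
      · rintro ⟨⟨hc, _⟩ | hc, _⟩
        · exact absurd hc (F_adj_jj_kk _ _)
        · exact absurd hc sym2_mixed_ne_jj
    · rw [Φ_kk, Φ_jj, replaceG_adj]
      constructor
      · intro hcon
        exact absurd hcon (F_adj_kk_jj _ _)
      · rintro ⟨⟨hc, _⟩ | hc, _⟩
        · exact absurd hc (F_adj_kk_jj _ _)
        · rw [Sym2.eq_swap (a := kk p)] at hc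
          exact absurd hc sym2_mixed_ne_jj
    · rw [Φ_kk, Φ_kk, F_adj_kk, replaceG_adj, F_adj_kk]
      constructor
      · intro h
        exact ⟨Or.inl ⟨h, Ne.symm sym2_jj_ne_kk⟩, fun hh => h.ne (kk_inj hh)⟩
      · rintro ⟨⟨h, _⟩ | hc, _⟩
        · exact h
        · exact absurd hc.symm sym2_jj_ne_kk
  refine ⟨jj r, jj s, jj k, jj l, ⟨?_, ?_, ?_⟩, hcp⟩
  · exact (F_adj_jj r s).mpr hadj
  · rcases hdisj with h1 | h1
    · left
      rw [SimpleGraph.compl_adj] at h1 ⊢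
      exact ⟨fun hh => h1.1 (jj_inj hh), fun hh => h1.2 ((F_adj_jj k l).mp hh)⟩
    · right
      exact sym2_jj.mpr h1
  · exact iso_of_copy_eq hcp

lemma adj_of_sym2 {α : Type*} {G : SimpleGraph α} {p q x y : α} (h : s(p, q) = s(x, y))
    (ha : G.Adj p q) : G.Adj x y := by
  rcases Sym2.eq_iff.mp h with ⟨rfl, rfl⟩ | ⟨rfl, rfl⟩
  · exact ha
  · exact ha.symm

lemma sw_copy_case1 {x y : V} (hK : K.Adj x y) (hH : ¬ H'.Adj x y)
    (hoff : ∀ p q, s(p, q) ≠ s(x, y) → (K.Adj p q ↔ H'.Adj p q)) :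
    copyG (addIsolated (sumGraph (sumGraph H' H'') K) t) σsw =
      replaceG (addIsolated (sumGraph (sumGraph H' H'') K) t)
        (kk x) (kk y) (.inl (.inl (.inl x))) (.inl (.inl (.inl y))) := by
  rw [copyG_eq_iff]
  intro u v
  rcases u with ((p | w) | p) | i <;> rcases v with ((q | w') | q) | i' <;>
    simp only [σsw_apply, swFun, replaceG_adj, kk] <;>
    simp [addIsolated, Sym2.eq_iff]
  · constructor
    · intro h
      refine ⟨?_, h.ne⟩
      by_cases he : s(p, q) = s(x, y)
      · right
        simpa [Sym2.eq_iff] using he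
      · exact Or.inl ((hoff p q he).mp h)
    · rintro ⟨hh | hh, hne⟩
      · by_cases he : s(p, q) = s(x, y)
        · exact absurd (adj_of_sym2 he hh) hH
        · exact (hoff p q he).mpr hh
      · rcases hh with ⟨rfl, rfl⟩ | ⟨rfl, rfl⟩
        · exact hK
        · exact hK.symm
  · exact fun h => h.ne
  · constructor
    · intro h
      have he : s(p, q) ≠ s(x, y) := by
        intro hc
        exact hH (adj_of_sym2 hc h)
      refine ⟨⟨(hoff p q he).mpr h, ?_, ?_⟩, h.ne⟩ <;>
        · rintro rfl rfl
          apply he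
          first | rfl | exact Sym2.eq_swap
    · rintro ⟨⟨hh, h1, h2⟩, hne⟩
      have he : s(p, q) ≠ s(x, y) := by
        intro hc
        rcases Sym2.eq_iff.mp hc with ⟨rfl, rfl⟩ | ⟨rfl, rfl⟩
        · exact h1 rfl rfl
        · exact h2 rfl rfl
      exact (hoff p q he).mp hh

lemma sw_copy_case2 {x y : V} (hH : H'.Adj x y) (hK : ¬ K.Adj x y)
    (hoff : ∀ p q, s(p, q) ≠ s(x, y) → (K.Adj p q ↔ H'.Adj p q)) :
    copyG (addIsolated (sumGraph (sumGraph H' H'') K) t) σsw =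
      replaceG (addIsolated (sumGraph (sumGraph H' H'') K) t)
        (.inl (.inl (.inl x))) (.inl (.inl (.inl y))) (kk x) (kk y) := by
  rw [copyG_eq_iff]
  intro u v
  rcases u with ((p | w) | p) | i <;> rcases v with ((q | w') | q) | i' <;>
    simp only [σsw_apply, swFun, replaceG_adj, kk] <;>
    simp [addIsolated, Sym2.eq_iff]
  · constructor
    · intro h
      have he : s(p, q) ≠ s(x, y) := by
        intro hc
        exact hK (adj_of_sym2 hc h)
      refine ⟨⟨(hoff p q he).mp h, ?_, ?_⟩, h.ne⟩ <;>
        · rintro rfl rfl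
          apply he
          first | rfl | exact Sym2.eq_swap
    · rintro ⟨⟨hh, h1, h2⟩, hne⟩
      have he : s(p, q) ≠ s(x, y) := by
        intro hc
        rcases Sym2.eq_iff.mp hc with ⟨rfl, rfl⟩ | ⟨rfl, rfl⟩
        · exact h1 rfl rfl
        · exact h2 rfl rfl
      exact (hoff p q he).mpr hh
  · exact fun h => h.ne
  · constructor
    · intro h
      refine ⟨?_, h.ne⟩
      by_cases he : s(p, q) = s(x, y)
      · right
        simpa [Sym2.eq_iff] using he
      · exact Or.inl ((hoff p q he).mpr h)
    · rintro ⟨hh | hh | hh, hne⟩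
      · by_cases he : s(p, q) = s(x, y)
        · exact adj_of_sym2 he.symm hH
        · exact (hoff p q he).mp hh
      · rcases hh with ⟨rfl, rfl⟩
        exact hH
      · rcases hh with ⟨rfl, rfl⟩
        exact hH.symm

lemma F_adj_gg (p q : V) :
    (addIsolated (sumGraph (sumGraph H' H'') K) t).Adj
      (.inl (.inl (.inl p))) (.inl (.inl (.inl q))) ↔ H'.Adj p q := by
  simp [addIsolated]

theorem core_local (x y : V) (hxy : x ≠ y)
    (hcase : (K.Adj x y ∧ ¬ H'.Adj x y) ∨ (H'.Adj x y ∧ ¬ K.Adj x y))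
    (hoff : ∀ p q, s(p, q) ≠ s(x, y) → (K.Adj p q ↔ H'.Adj p q))
    (ht1 : 1 ≤ t)
    (hL : LocalAmoeba (addIsolated (sumGraph H' H'') t)) :
    LocalAmoeba (addIsolated (sumGraph (sumGraph H' H'') K) t) := by
  classical
  have hΦmem : ∀ π : Perm ((V ⊕ W) ⊕ Fin t),
      Φ π ∈ ampGroup (addIsolated (sumGraph (sumGraph H' H'') K) t) := by
    intro π
    have h1 : π ∈ Subgroup.closure (feasiblePerms (addIsolated (sumGraph H' H'') t)) := by
      have h0 : ampGroup (addIsolated (sumGraph H' H'') t) =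
          Subgroup.closure (feasiblePerms (addIsolated (sumGraph H' H'') t)) := rfl
      rw [← h0, hL]
      exact Subgroup.mem_top π
    have h2 : Φ π ∈ Subgroup.map Φ
        (Subgroup.closure (feasiblePerms (addIsolated (sumGraph H' H'') t))) := ⟨π, h1, rfl⟩
    rw [MonoidHom.map_closure] at h2
    have h3 : Subgroup.closure (Φ '' feasiblePerms (addIsolated (sumGraph H' H'') t)) ≤
        ampGroup (addIsolated (sumGraph (sumGraph H' H'') K) t) := by
      refine (Subgroup.closure_le _).mpr ?_
      rintro _ ⟨σ0, hσ0, rfl⟩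
      exact Subgroup.subset_closure (phi_feasible σ0 hσ0)
    exact h3 h2
  have hσmem : σsw ∈ ampGroup (addIsolated (sumGraph (sumGraph H' H'') K) t) := by
    rcases hcase with ⟨hK, hH⟩ | ⟨hH, hK⟩
    · refine mem_ampGroup (kk x) (kk y) (.inl (.inl (.inl x))) (.inl (.inl (.inl y)))
        ⟨(F_adj_kk x y).mpr hK, Or.inl ?_, iso_of_copy_eq (sw_copy_case1 hK hH hoff)⟩
        (sw_copy_case1 hK hH hoff)
      rw [SimpleGraph.compl_adj]
      refine ⟨by simp [hxy], ?_⟩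
      rw [F_adj_gg]
      exact hH
    · refine mem_ampGroup (.inl (.inl (.inl x))) (.inl (.inl (.inl y))) (kk x) (kk y)
        ⟨(F_adj_gg x y).mpr hH, Or.inl ?_, iso_of_copy_eq (sw_copy_case2 hH hK hoff)⟩
        (sw_copy_case2 hH hK hoff)
      rw [SimpleGraph.compl_adj]
      refine ⟨fun hc => hxy (kk_inj hc), ?_⟩
      rw [F_adj_kk]
      exact hK
  have hswsw : ∀ u : (((V ⊕ W) ⊕ V) ⊕ Fin t), σsw (σsw u) = u := fun u => swFun_invol u
  have hjj : ∀ a b : (V ⊕ W) ⊕ Fin t,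
      Equiv.swap (jj a) (jj b) ∈ ampGroup (addIsolated (sumGraph (sumGraph H' H'') K) t) := by
    intro a b
    have heq : Equiv.swap (jj a) (jj b) = Φ (Equiv.swap a b) := by
      ext z
      rcases cases_X z with ⟨c, rfl⟩ | ⟨p, rfl⟩
      · rw [Φ_jj]
        rcases eq_or_ne c a with rfl | h1
        · rw [Equiv.swap_apply_left, Equiv.swap_apply_left]
        rcases eq_or_ne c b with rfl | h2
        · rw [Equiv.swap_apply_right, Equiv.swap_apply_right]
        · rw [Equiv.swap_apply_of_ne_of_ne h1 h2,
            Equiv.swap_apply_of_ne_of_ne (jj_inj.ne h1) (jj_inj.ne h2)]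
      · rw [Φ_kk, Equiv.swap_apply_of_ne_of_ne ((jj_ne_kk a p).symm) ((jj_ne_kk b p).symm)]
    rw [heq]
    exact hΦmem _
  have hconj : ∀ u v : (((V ⊕ W) ⊕ V) ⊕ Fin t),
      Equiv.swap (σsw u) (σsw v) ∈ ampGroup (addIsolated (sumGraph (sumGraph H' H'') K) t) →
      Equiv.swap u v ∈ ampGroup (addIsolated (sumGraph (sumGraph H' H'') K) t) := by
    intro u v h
    have heq : Equiv.swap u v = σsw * Equiv.swap (σsw u) (σsw v) * σsw⁻¹ := by
      rw [← Equiv.swap_apply_apply, hswsw, hswsw]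
    rw [heq]
    exact mul_mem (mul_mem hσmem h) (inv_mem hσmem)
  have hmix : ∀ (a : (V ⊕ W) ⊕ Fin t) (q : V),
      Equiv.swap (jj a) (kk q) ∈ ampGroup (addIsolated (sumGraph (sumGraph H' H'') K) t) := by
    intro a q
    have h1 : Equiv.swap (jj (.inr ⟨0, ht1⟩)) (kk q) ∈
        ampGroup (addIsolated (sumGraph (sumGraph H' H'') K) t) := by
      apply hconj
      have e1 : σsw (jj (.inr ⟨0, ht1⟩) : ((V ⊕ W) ⊕ V) ⊕ Fin t) = jj (.inr ⟨0, ht1⟩) := rfl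
      have e2 : σsw (kk q : ((V ⊕ W) ⊕ V) ⊕ Fin t) = jj (.inl (.inl q)) := rfl
      rw [e1, e2]
      exact hjj _ _
    have h2 : Equiv.swap (jj a) (kk q) =
        Equiv.swap (jj a) (jj (.inr ⟨0, ht1⟩)) * Equiv.swap (jj (.inr ⟨0, ht1⟩)) (kk q) *
          (Equiv.swap (jj a) (jj (.inr ⟨0, ht1⟩)))⁻¹ := by
      rw [← Equiv.swap_apply_apply, Equiv.swap_apply_right,
        Equiv.swap_apply_of_ne_of_ne ((jj_ne_kk a q).symm) ((jj_ne_kk _ q).symm)]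
    rw [h2]
    exact mul_mem (mul_mem (hjj _ _) h1) (inv_mem (hjj _ _))
  have hswap : ∀ u v : (((V ⊕ W) ⊕ V) ⊕ Fin t),
      Equiv.swap u v ∈ ampGroup (addIsolated (sumGraph (sumGraph H' H'') K) t) := by
    intro u v
    rcases cases_X u with ⟨a, rfl⟩ | ⟨p, rfl⟩ <;> rcases cases_X v with ⟨b, rfl⟩ | ⟨q, rfl⟩
    · exact hjj a b
    · exact hmix a q
    · rw [Equiv.swap_comm]
      exact hmix b p
    · apply hconj
      have e1 : σsw (kk p : ((V ⊕ W) ⊕ V) ⊕ Fin t) = jj (.inl (.inl p)) := rfl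
      have e2 : σsw (kk q : ((V ⊕ W) ⊕ V) ⊕ Fin t) = jj (.inl (.inl q)) := rfl
      rw [e1, e2]
      exact hjj _ _
  have hmatch : ∀ (s : Finset (((V ⊕ W) ⊕ V) ⊕ Fin t)) (π : Perm (((V ⊕ W) ⊕ V) ⊕ Fin t)),
      ∃ g ∈ ampGroup (addIsolated (sumGraph (sumGraph H' H'') K) t), ∀ z ∈ s, g z = π z := by
    intro s π
    induction s using Finset.induction_on with
    | empty => exact ⟨1, one_mem _, by simp⟩
    | @insert a s hnotin ih =>
      obtain ⟨g, hg, hgs⟩ := ih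
      refine ⟨g * Equiv.swap a (g⁻¹ (π a)), mul_mem hg (hswap _ _), ?_⟩
      intro z hz
      rcases Finset.mem_insert.mp hz with rfl | hz'
      · rw [Perm.mul_apply, Equiv.swap_apply_left, Perm.coe_inv, Equiv.apply_symm_apply]
      · have hza : z ≠ a := fun h => hnotin (h ▸ hz')
        by_cases hzc : z = g⁻¹ (π a)
        · exfalso
          have h1 : g z = π a := by rw [hzc, Perm.coe_inv, Equiv.apply_symm_apply]
          rw [hgs z hz'] at h1
          exact hza (π.injective h1)
        · rw [Perm.mul_apply, Equiv.swap_apply_of_ne_of_ne hza hzc]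
          exact hgs z hz'
  have hfd : ∀ π : Perm ((V ⊕ W) ⊕ Fin t), π ∈ finDefect (addIsolated (sumGraph H' H'') t) := by
    have hle : ampGroup (addIsolated (sumGraph H' H'') t) ≤
        finDefect (addIsolated (sumGraph H' H'') t) :=
      (Subgroup.closure_le _).mpr feasible_subset_finDefect
    rw [hL] at hle
    exact fun π => hle (Subgroup.mem_top π)
  have hsupΓ : {v : (V ⊕ W) ⊕ Fin t | ∃ u, (addIsolated (sumGraph H' H'') t).Adj v u}.Finite :=
    support_finite _ (.inr ⟨0, ht1⟩) (fun u => G_isolated _ u) hfd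
  have hsupH' : {p : V | ∃ q, H'.Adj p q}.Finite := by
    have hsub : {p : V | ∃ q, H'.Adj p q} ⊆
        (fun p : V => (Sum.inl (Sum.inl p) : (V ⊕ W) ⊕ Fin t)) ⁻¹'
          {v : (V ⊕ W) ⊕ Fin t | ∃ u, (addIsolated (sumGraph H' H'') t).Adj v u} := by
      rintro p ⟨q, hq⟩
      exact ⟨Sum.inl (Sum.inl q), by simp [addIsolated, hq]⟩
    refine Set.Finite.subset (hsupΓ.preimage ?_) hsub
    intro p _ q _ h
    simpa using h
  have hsupF : {u : ((V ⊕ W) ⊕ V) ⊕ Fin t |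
      ∃ w, (addIsolated (sumGraph (sumGraph H' H'') K) t).Adj u w}.Finite := by
    refine Set.Finite.subset ((hsupΓ.image jj).union
      ((hsupH'.union ((Set.finite_singleton y).insert x)).image kk)) ?_
    rintro u ⟨w, hw⟩
    rcases cases_X u with ⟨a, rfl⟩ | ⟨p, rfl⟩ <;> rcases cases_X w with ⟨b, rfl⟩ | ⟨q, rfl⟩
    · exact Or.inl ⟨a, ⟨b, (F_adj_jj a b).mp hw⟩, rfl⟩
    · exact absurd hw (F_adj_jj_kk _ _)
    · exact absurd hw (F_adj_kk_jj _ _)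
    · refine Or.inr ⟨p, ?_, rfl⟩
      have hK : K.Adj p q := (F_adj_kk p q).mp hw
      by_cases he : s(p, q) = s(x, y)
      · right
        rcases Sym2.eq_iff.mp he with ⟨rfl, _⟩ | ⟨rfl, _⟩
        · exact Set.mem_insert _ _
        · exact Set.mem_insert_of_mem _ rfl
      · exact Or.inl ⟨q, (hoff p q he).mp hK⟩
  obtain ⟨er, es, hes⟩ : ∃ er es : ((V ⊕ W) ⊕ V) ⊕ Fin t,
      (addIsolated (sumGraph (sumGraph H' H'') K) t).Adj er es := by
    rcases hcase with ⟨hK, _⟩ | ⟨hH, _⟩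
    · exact ⟨kk x, kk y, (F_adj_kk x y).mpr hK⟩
    · exact ⟨.inl (.inl (.inl x)), .inl (.inl (.inl y)), (F_adj_gg x y).mpr hH⟩
  have htriv : ∀ h : Perm (((V ⊕ W) ⊕ V) ⊕ Fin t),
      (∀ u, (∃ w, (addIsolated (sumGraph (sumGraph H' H'') K) t).Adj u w) → h u = u) →
      h ∈ ampGroup (addIsolated (sumGraph (sumGraph H' H'') K) t) := by
    intro h hfix
    have haux : ∀ u, ¬ (∃ w, (addIsolated (sumGraph (sumGraph H' H'') K) t).Adj u w) →
        ¬ (∃ w, (addIsolated (sumGraph (sumGraph H' H'') K) t).Adj (h u) w) := by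
      intro u hu hcon
      have h1 : h (h u) = h u := hfix (h u) hcon
      exact hu ((h.injective h1) ▸ hcon)
    have hcpF : copyG (addIsolated (sumGraph (sumGraph H' H'') K) t) h =
        addIsolated (sumGraph (sumGraph H' H'') K) t := by
      rw [copyG_eq_iff]
      intro u v
      by_cases hu : ∃ w, (addIsolated (sumGraph (sumGraph H' H'') K) t).Adj u w
      · by_cases hv : ∃ w, (addIsolated (sumGraph (sumGraph H' H'') K) t).Adj v w
        · rw [hfix u hu, hfix v hv]
        · exact iff_of_false (fun hc => haux v hv ⟨h u, hc.symm⟩) (fun hc => hv ⟨u, hc.symm⟩)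
      · exact iff_of_false (fun hc => haux u hu ⟨h v, hc⟩) (fun hc => hu ⟨v, hc⟩)
    refine mem_ampGroup er es er es ⟨hes, Or.inr rfl, ?_⟩ ?_
    · rw [replaceG_self hes]
      exact ⟨RelIso.refl _⟩
    · rw [replaceG_self hes]
      exact hcpF
  show ampGroup (addIsolated (sumGraph (sumGraph H' H'') K) t) = ⊤
  refine (Subgroup.eq_top_iff' _).mpr fun π => ?_
  obtain ⟨g, hg, hgs⟩ := hmatch hsupF.toFinset π
  have hmem2 : g⁻¹ * π ∈ ampGroup (addIsolated (sumGraph (sumGraph H' H'') K) t) := by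
    refine htriv _ fun u hu => ?_
    have h1 : g u = π u := hgs u (hsupF.mem_toFinset.mpr hu)
    rw [Perm.mul_apply, ← h1, Perm.coe_inv, Equiv.symm_apply_apply]
  have hfinal : π = g * (g⁻¹ * π) := by group
  rw [hfinal]
  exact mul_mem hg hmem2

end Adj

theorem core_global {V W : Type*} {H' : SimpleGraph V} {H'' : SimpleGraph W}
    {K : SimpleGraph V} (x y : V) (hxy : x ≠ y)
    (hcase : (K.Adj x y ∧ ¬ H'.Adj x y) ∨ (H'.Adj x y ∧ ¬ K.Adj x y))
    (hoff : ∀ p q, s(p, q) ≠ s(x, y) → (K.Adj p q ↔ H'.Adj p q))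
    (hG : GlobalAmoeba (sumGraph H' H'')) :
    GlobalAmoeba (sumGraph (sumGraph H' H'') K) := by
  obtain ⟨T, hT⟩ := hG
  exact ⟨max T 1, fun t ht => core_local x y hxy hcase hoff
    (le_trans (le_max_right _ _) ht) (hT t (le_trans (le_max_left _ _) ht))⟩

theorem stmt16 {V W : Type*} (H' : SimpleGraph V) (H'' : SimpleGraph W)
    (hG : GlobalAmoeba (sumGraph H' H'')) :
    (∀ a b : V, a ≠ b → ¬ H'.Adj a b →
      GlobalAmoeba (sumGraph (sumGraph H' H'')
        (SimpleGraph.fromEdgeSet (H'.edgeSet ∪ {s(a, b)})))) ∧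
    (∀ a b : V, H'.Adj a b →
      GlobalAmoeba (sumGraph (sumGraph H' H'') (H'.deleteEdges {s(a, b)}))) := by
  constructor
  · intro a b hab hnadj
    refine core_global a b hab (Or.inl ⟨?_, hnadj⟩) ?_ hG
    · rw [SimpleGraph.fromEdgeSet_adj]
      exact ⟨Or.inr rfl, hab⟩
    · intro p q hne
      rw [SimpleGraph.fromEdgeSet_adj]
      constructor
      · rintro ⟨h | h, hpq⟩
        · exact h
        · exact absurd h hne
      · exact fun h => ⟨Or.inl h, h.ne⟩
  · intro a b hadj
    refine core_global a b hadj.ne (Or.inr ⟨hadj, ?_⟩) ?_ hG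
    · rw [SimpleGraph.deleteEdges_adj]
      rintro ⟨_, h⟩
      exact h rfl
    · intro p q hne
      rw [SimpleGraph.deleteEdges_adj]
      exact ⟨fun h => h.1, fun h => ⟨h, hne⟩⟩
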